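/- Let F be a field, n ≥ 1, and A a subalgebra of M_n(F) that is spanned as an F-vector space by its nilpotent elements, and such that the characteristic polynomial of every element of A splits into linear factors over F. Then A^n = 0; in particular every element of A is nilpotent. -/

import Mathlib

open Polynomial Module LinearMap Submodule

universe u v

variable {F : Type u} [Field F]

section Helpers

variable {V : Type v} [AddCommGroup V] [Module F V]

/-- The restriction of the elements of a submodule `S` of endomorphisms to an
invariant subspace `U`, as a linear map from `S` to `End F U`. -/
def restrictL (S : Submodule F (Module.End F V)) (U : Submodule F V)
    (hU : ∀ s ∈ S, ∀ x ∈ U, s x ∈ U) : ↥S →ₗ[F] Module.End F ↥U where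
  toFun s := LinearMap.restrict (s : Module.End F V) (hU s s.2)
  map_add' s t := by
    refine LinearMap.ext fun x => Subtype.ext ?_
    simp [LinearMap.restrict_coe_apply]
  map_smul' c s := by
    refine LinearMap.ext fun x => Subtype.ext ?_
    simp [LinearMap.restrict_coe_apply]

lemma restrictL_coe_apply (S : Submodule F (Module.End F V)) (U : Submodule F V)
    (hU : ∀ s ∈ S, ∀ x ∈ U, s x ∈ U) (s : ↥S) (x : ↥U) :
    ((restrictL S U hU s) x : V) = (s : Module.End F V) x := rfl

lemma isNilpotent_restrict {f : Module.End F V} {U : Submodule F V}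
    (hU : ∀ x ∈ U, f x ∈ U) (hf : IsNilpotent f) :
    IsNilpotent (f.restrict hU) := by
  obtain ⟨k, hk⟩ := hf
  refine ⟨k, ?_⟩
  refine LinearMap.ext fun x => Subtype.ext ?_
  rw [Module.End.pow_restrict]
  simp [LinearMap.restrict_coe_apply, hk]

lemma aeval_restrict_coe {f : Module.End F V} {U : Submodule F V}
    (hU : ∀ x ∈ U, f x ∈ U) (p : F[X]) (x : ↥U) :
    ((Polynomial.aeval (f.restrict hU) p) x : V) = (Polynomial.aeval f p) (x : V) := by
  rw [aeval_eq_sum_range, aeval_eq_sum_range]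
  simp only [LinearMap.sum_apply, LinearMap.smul_apply]
  rw [Submodule.coe_sum]
  refine Finset.sum_congr rfl fun i _ => ?_
  rw [Submodule.coe_smul]
  congr 1
  rw [Module.End.pow_restrict]
  exact LinearMap.restrict_coe_apply _ _ _

lemma minpoly_restrict_splits [FiniteDimensional F V] {f : Module.End F V} {U : Submodule F V}
    (hU : ∀ x ∈ U, f x ∈ U) (hf : (minpoly F f).Splits) :
    (minpoly F (f.restrict hU)).Splits := by
  have hint : IsIntegral F f := Algebra.IsIntegral.isIntegral f
  refine Polynomial.Splits.of_dvd hf (minpoly.ne_zero hint) ?_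
  refine minpoly.dvd F _ ?_
  refine LinearMap.ext fun x => Subtype.ext ?_
  rw [aeval_restrict_coe hU]
  simp [minpoly.aeval]

lemma dualMap_pow (f : Module.End F V) (k : ℕ) :
    (f.dualMap) ^ k = ((f ^ k).dualMap : Module.End F (Module.Dual F V)) := by
  induction k with
  | zero =>
    refine LinearMap.ext fun φ => ?_
    ext x
    simp [LinearMap.dualMap_apply]
  | succ k ih =>
    rw [pow_succ, ih, pow_succ']
    refine LinearMap.ext fun φ => ?_
    ext x
    simp [Module.End.mul_apply, LinearMap.dualMap_apply]

lemma isNilpotent_dualMap {f : Module.End F V} (hf : IsNilpotent f) :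
    IsNilpotent (f.dualMap : Module.End F (Module.Dual F V)) := by
  obtain ⟨k, hk⟩ := hf
  refine ⟨k, ?_⟩
  rw [dualMap_pow, hk]
  refine LinearMap.ext fun φ => ?_
  ext x
  simp [LinearMap.dualMap_apply]

lemma aeval_dualMap (f : Module.End F V) (p : F[X]) :
    Polynomial.aeval (f.dualMap : Module.End F (Module.Dual F V)) p
      = (Polynomial.aeval f p).dualMap := by
  refine LinearMap.ext fun φ => ?_
  ext x
  rw [aeval_eq_sum_range, aeval_eq_sum_range]
  simp [dualMap_pow, LinearMap.dualMap_apply, LinearMap.sum_apply, map_sum, map_smul]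

lemma minpoly_dualMap_splits [FiniteDimensional F V] {f : Module.End F V}
    (hf : (minpoly F f).Splits) :
    (minpoly F (f.dualMap : Module.End F (Module.Dual F V))).Splits := by
  have hint : IsIntegral F f := Algebra.IsIntegral.isIntegral f
  refine Polynomial.Splits.of_dvd hf (minpoly.ne_zero hint) ?_
  refine minpoly.dvd F _ ?_
  rw [aeval_dualMap, minpoly.aeval]
  refine LinearMap.ext fun φ => ?_
  ext x
  simp [LinearMap.dualMap_apply]

/-- The hypotheses we carry through the induction. -/
def GoodAlg (S : Submodule F (Module.End F V)) : Prop :=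
  (∀ s ∈ S, ∀ t ∈ S, s * t ∈ S) ∧
  (∀ s ∈ S, s ∈ Submodule.span F {x : Module.End F V | x ∈ S ∧ IsNilpotent x}) ∧
  (∀ s ∈ S, (minpoly F s).Splits)

lemma goodAlg_restrict {S : Submodule F (Module.End F V)} [FiniteDimensional F V]
    (hS : GoodAlg S) {U : Submodule F V} (hU : ∀ s ∈ S, ∀ x ∈ U, s x ∈ U) :
    GoodAlg (LinearMap.range (restrictL S U hU)) := by
  obtain ⟨hmul, hspan, hsplit⟩ := hS
  refine ⟨?_, ?_, ?_⟩
  · rintro _ ⟨s, rfl⟩ _ ⟨t, rfl⟩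
    refine ⟨⟨(s : Module.End F V) * t, hmul _ s.2 _ t.2⟩, ?_⟩
    refine LinearMap.ext fun x => Subtype.ext ?_
    simp [restrictL_coe_apply, Module.End.mul_apply]
  · rintro _ ⟨s, rfl⟩
    have hXS : Submodule.span F {x : Module.End F V | x ∈ S ∧ IsNilpotent x} ≤ S :=
      Submodule.span_le.mpr fun x hx => hx.1
    have key : ∀ (x : Module.End F V) (hx : x ∈ Submodule.span F
        {x : Module.End F V | x ∈ S ∧ IsNilpotent x}), ∀ (h : x ∈ S),
        restrictL S U hU ⟨x, h⟩ ∈ Submodule.span F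
          {y : Module.End F ↥U | y ∈ LinearMap.range (restrictL S U hU) ∧ IsNilpotent y} := by
      intro x hx
      induction hx using Submodule.span_induction with
      | mem x hx =>
        intro h
        exact Submodule.subset_span ⟨⟨⟨x, h⟩, rfl⟩, isNilpotent_restrict (hU x h) hx.2⟩
      | zero =>
        intro h
        have : (⟨0, h⟩ : ↥S) = 0 := rfl
        rw [this, map_zero]
        exact Submodule.zero_mem _
      | add x y hx hy ihx ihy =>
        intro h
        have : (⟨x + y, h⟩ : ↥S) = ⟨x, hXS hx⟩ + ⟨y, hXS hy⟩ := rfl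
        rw [this, map_add]
        exact Submodule.add_mem _ (ihx (hXS hx)) (ihy (hXS hy))
      | smul c x hx ihx =>
        intro h
        have : (⟨c • x, h⟩ : ↥S) = c • (⟨x, hXS hx⟩ : ↥S) := rfl
        rw [this, map_smul]
        exact Submodule.smul_mem _ _ (ihx (hXS hx))
    exact key (s : Module.End F V) (hspan _ s.2) s.2
  · rintro _ ⟨s, rfl⟩
    exact minpoly_restrict_splits (hU _ s.2) (hsplit _ s.2)

lemma goodAlg_dual {S : Submodule F (Module.End F V)} [FiniteDimensional F V]
    (hS : GoodAlg S) :
    GoodAlg (Submodule.map (Module.Dual.transpose (R := F) (M := V) (M' := V)) S) := by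
  obtain ⟨hmul, hspan, hsplit⟩ := hS
  refine ⟨?_, ?_, ?_⟩
  · rintro _ ⟨s, hs, rfl⟩ _ ⟨t, ht, rfl⟩
    refine ⟨t * s, hmul _ ht _ hs, ?_⟩
    refine LinearMap.ext fun φ => ?_
    ext x
    simp [Module.Dual.transpose_apply, Module.End.mul_apply]
  · rintro _ ⟨s, hs, rfl⟩
    have h1 : Module.Dual.transpose (R := F) s ∈ Submodule.map
        (Module.Dual.transpose (R := F) (M := V) (M' := V))
        (Submodule.span F {x : Module.End F V | x ∈ S ∧ IsNilpotent x}) :=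
      ⟨s, hspan s hs, rfl⟩
    rw [Submodule.map_span] at h1
    refine Submodule.span_le.mpr ?_ h1
    rintro _ ⟨x, ⟨hxS, hxN⟩, rfl⟩
    refine Submodule.subset_span ⟨⟨x, hxS, rfl⟩, ?_⟩
    exact isNilpotent_dualMap hxN
  · rintro _ ⟨s, hs, rfl⟩
    exact minpoly_dualMap_splits (hsplit s hs)

lemma trace_eq_zero_of_goodAlg [FiniteDimensional F V] {S : Submodule F (Module.End F V)}
    (hS : GoodAlg S) {s : Module.End F V} (hs : s ∈ S) :
    LinearMap.trace F V s = 0 := by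
  have h1 : {x : Module.End F V | x ∈ S ∧ IsNilpotent x} ⊆
      ↑(LinearMap.ker (LinearMap.trace F V)) := by
    rintro x ⟨-, hxN⟩
    have := LinearMap.isNilpotent_trace_of_isNilpotent hxN
    simpa [LinearMap.mem_ker] using this.eq_zero
  have h2 := Submodule.span_le.mpr h1 (hS.2.1 s hs)
  simpa [LinearMap.mem_ker] using h2

end Helpers

/-- Key lemma: a "good" algebra of endomorphisms of a nonzero finite-dimensional
space has a common kernel vector. -/
lemma exists_common_kernel (N : ℕ) :
    ∀ (V : Type v) [AddCommGroup V] [Module F V] [FiniteDimensional F V]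
      (S : Submodule F (Module.End F V)), GoodAlg S → Module.finrank F V ≤ N →
      0 < Module.finrank F V → ∃ v : V, v ≠ 0 ∧ ∀ s ∈ S, s v = 0 := by
  induction N with
  | zero => intro V _ _ _ S _ hle hpos; omega
  | succ N ih =>
    intro V _ _ _ S hS hle hpos
    classical
    have hnt : Nontrivial V := Module.finrank_pos_iff.mp hpos
    set K : Submodule F V := ⨅ s : ↥S, LinearMap.ker (s : Module.End F V) with hKdef
    have memK : ∀ v : V, v ∈ K ↔ ∀ s ∈ S, s v = 0 := by
      intro v
      simp only [hKdef, Submodule.mem_iInf, LinearMap.mem_ker]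
      exact ⟨fun h s hs => h ⟨s, hs⟩, fun h s => h s s.2⟩
    by_cases hK : K = ⊥
    · exfalso
      -- transitivity: for every nonzero v and every x there is s ∈ S with s v = x
      have trans : ∀ v : V, v ≠ 0 → ∀ x : V, ∃ s ∈ S, s v = x := by
        intro v hv x
        set U : Submodule F V := Submodule.map (LinearMap.applyₗ v) S with hUdef
        have memU : ∀ y : V, y ∈ U ↔ ∃ s ∈ S, s v = y := by
          intro y
          simp only [hUdef, Submodule.mem_map]
          exact ⟨fun ⟨s, hs, h⟩ => ⟨s, hs, h⟩, fun ⟨s, hs, h⟩ => ⟨s, hs, h⟩⟩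
        by_cases hU : U = ⊤
        · exact (memU x).mp (hU ▸ Submodule.mem_top)
        · exfalso
          have hUinv : ∀ s ∈ S, ∀ y ∈ U, s y ∈ U := by
            intro s hs y hy
            obtain ⟨t, ht, rfl⟩ := (memU y).mp hy
            exact (memU _).mpr ⟨s * t, hS.1 s hs t ht, rfl⟩
          have hUne : U ≠ ⊥ := by
            have : ∃ s ∈ S, s v ≠ 0 := by
              by_contra hc
              push_neg at hc
              exact hv (by simpa using (hK ▸ (memK v).mpr hc : v ∈ (⊥ : Submodule F V)))
            obtain ⟨s, hs, hsv⟩ := this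
            exact fun hb => hsv (by simpa using (hb ▸ (memU (s v)).mpr ⟨s, hs, rfl⟩ :
              s v ∈ (⊥ : Submodule F V)))
          have hUlt : Module.finrank F ↥U < Module.finrank F V :=
            Submodule.finrank_lt hU
          have hUpos : 0 < Module.finrank F ↥U := by
            rcases Nat.eq_zero_or_pos (Module.finrank F ↥U) with h | h
            · exact absurd (Submodule.finrank_eq_zero.mp h) hUne
            · exact h
          obtain ⟨u, hu0, hu⟩ := ih ↥U (LinearMap.range (restrictL S U hUinv))
            (goodAlg_restrict hS hUinv) (by omega) hUpos
          have hmem : (u : V) ∈ K := by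
            rw [memK]
            intro s hs
            have h1 := hu (restrictL S U hUinv ⟨s, hs⟩) ⟨⟨s, hs⟩, rfl⟩
            have h2 : ((restrictL S U hUinv ⟨s, hs⟩) u : V) = s (u : V) := rfl
            rw [h1] at h2
            simpa using h2.symm
          rw [hK] at hmem
          exact hu0 (Subtype.ext (by simpa using hmem))
      -- there is a nonzero element of S
      have hex : ∃ s, s ∈ S ∧ s ≠ 0 := by
        by_contra hc
        push_neg at hc
        obtain ⟨v, hv⟩ := exists_ne (0 : V)
        have : v ∈ K := (memK v).mpr fun s hs => by rw [hc s hs]; rfl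
        rw [hK] at this
        exact hv (by simpa using this)
      have hP : ∃ k, ∃ s, s ∈ S ∧ s ≠ 0 ∧ Module.finrank F ↥(LinearMap.range s) = k := by
        obtain ⟨s, hs, h0⟩ := hex
        exact ⟨_, s, hs, h0, rfl⟩
      set r := Nat.find hP with hrdef
      obtain ⟨A, hAS, hA0, hAr⟩ := Nat.find_spec hP
      rw [← hrdef] at hAr
      have hmin : ∀ s ∈ S, s ≠ 0 → r ≤ Module.finrank F ↥(LinearMap.range s) :=
        fun s hs h0 => Nat.find_min' hP ⟨s, hs, h0, rfl⟩
      have hrange_ne : LinearMap.range A ≠ ⊥ :=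
        fun hb => hA0 (LinearMap.range_eq_bot.mp hb)
      have hr1 : 1 ≤ r := by
        rcases Nat.eq_zero_or_pos r with h | h
        · exact absurd (Submodule.finrank_eq_zero.mp (by rw [hAr, h])) hrange_ne
        · exact h
      have hAx : ∃ x : V, A x ≠ 0 := by
        by_contra hc
        push_neg at hc
        exact hA0 (LinearMap.ext fun x => by rw [hc x]; rfl)
      -- key: for every B ∈ S, A * B * A is a scalar multiple of A
      have key : ∀ B ∈ S, ∃ lam : F, A * B * A = lam • A := by
        intro B hB
        have hEstab : ∀ y ∈ LinearMap.range A, (A * B) y ∈ LinearMap.range A := by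
          rintro _ ⟨x, rfl⟩
          exact ⟨B (A x), rfl⟩
        set Ehat := (A * B).restrict hEstab with hEhat
        have hABS : A * B ∈ S := hS.1 A hAS B hB
        have hsplitE : (minpoly F Ehat).Splits :=
          minpoly_restrict_splits hEstab (hS.2.2 _ hABS)
        have hnt' : Nontrivial ↥(LinearMap.range A) :=
          Submodule.nontrivial_iff_ne_bot.mpr hrange_ne
        have hdeg : (minpoly F Ehat).degree ≠ 0 := by
          have h1 : 0 < (minpoly F Ehat).natDegree :=
            minpoly.natDegree_pos (Algebra.IsIntegral.isIntegral Ehat)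
          have h2 : (minpoly F Ehat).natDegree ≠ 0 := by omega
          exact_mod_cast Polynomial.degree_ne_of_natDegree_ne h2
        obtain ⟨lam, hlam⟩ := hsplitE.exists_eval_eq_zero hdeg
        have hroot : (minpoly F Ehat).IsRoot lam := hlam
        have hEig := Module.End.hasEigenvalue_of_isRoot hroot
        obtain ⟨w, hw⟩ := hEig.exists_hasEigenvector
        have hww : Ehat w = lam • w := Module.End.mem_eigenspace_iff.mp hw.1
        refine ⟨lam, ?_⟩
        set D := A * B * A - lam • A with hDdef
        have hDS : D ∈ S := Submodule.sub_mem S (hS.1 _ hABS A hAS) (Submodule.smul_mem S lam hAS)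
        have hD0 : D = 0 := by
          by_contra hD0
          have hge := hmin D hDS hD0
          set T : Module.End F V := (A * B) - lam • (1 : Module.End F V) with hTdef
          have hDT : ∀ x : V, D x = T (A x) := by
            intro x
            simp [hDdef, hTdef, Module.End.mul_apply, LinearMap.sub_apply, LinearMap.smul_apply]
          have hrangeD : LinearMap.range D ≤
              LinearMap.range (T ∘ₗ (LinearMap.range A).subtype) := by
            rintro _ ⟨x, rfl⟩
            exact ⟨⟨A x, ⟨x, rfl⟩⟩, (hDT x).symm⟩
          have hkerw : w ∈ LinearMap.ker (T ∘ₗ (LinearMap.range A).subtype) := by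
            rw [LinearMap.mem_ker]
            have h1 : (T ∘ₗ (LinearMap.range A).subtype) w = (A * B) (w : V) - lam • (w : V) := by
              simp [hTdef, LinearMap.sub_apply, LinearMap.smul_apply, Module.End.one_apply]
            rw [h1]
            have h2 : (A * B) (w : V) = (Ehat w : V) := (LinearMap.restrict_coe_apply _ _ _).symm
            rw [h2, hww]
            simp
          have hkerpos : 0 < Module.finrank F
              ↥(LinearMap.ker (T ∘ₗ (LinearMap.range A).subtype)) := by
            rcases Nat.eq_zero_or_pos (Module.finrank F
              ↥(LinearMap.ker (T ∘ₗ (LinearMap.range A).subtype))) with h | h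
            · exfalso
              have hker_bot := Submodule.finrank_eq_zero.mp h
              rw [hker_bot] at hkerw
              exact hw.2 (by simpa using hkerw)
            · exact h
          have hrn := LinearMap.finrank_range_add_finrank_ker
            (T ∘ₗ (LinearMap.range A).subtype)
          have hmono := Submodule.finrank_mono hrangeD
          omega
        rw [hDdef, sub_eq_zero] at hD0
        exact hD0
      -- minimal rank is 1
      have hr : r = 1 := by
        by_contra hne
        have hr2 : 2 ≤ r := by omega
        obtain ⟨u₁, hu₁⟩ := hAx
        have hex2 : ∃ u₂, A u₂ ∉ Submodule.span F {A u₁} := by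
          by_contra h
          push_neg at h
          have hle' : LinearMap.range A ≤ Submodule.span F {A u₁} := by
            rintro _ ⟨x, rfl⟩
            exact h x
          have := Submodule.finrank_mono hle'
          rw [hAr, finrank_span_singleton hu₁] at this
          omega
        obtain ⟨u₂, hu₂⟩ := hex2
        obtain ⟨B, hB, hBv⟩ := trans (A u₁) hu₁ u₂
        obtain ⟨lam, hlam⟩ := key B hB
        apply hu₂
        have h1 : (A * B * A) u₁ = A u₂ := by
          simp [Module.End.mul_apply, hBv]
        rw [hlam] at h1
        rw [← h1]
        exact Submodule.smul_mem _ _ (Submodule.mem_span_singleton_self _)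
      -- final contradiction via trace
      obtain ⟨u₀, hu₀⟩ := hAx
      set v := A u₀ with hvdef
      obtain ⟨B, hB, hBv⟩ := trans v hu₀ u₀
      set M := A * B with hMdef
      have hMS : M ∈ S := hS.1 A hAS B hB
      have hMv : M v = v := by
        exact (congrArg A hBv).trans hvdef.symm
      have hspan_eq : Submodule.span F {v} = LinearMap.range A := by
        refine Submodule.eq_of_le_of_finrank_eq ?_ ?_
        · rw [Submodule.span_le, Set.singleton_subset_iff]
          exact ⟨u₀, rfl⟩
        · rw [finrank_span_singleton hu₀, hAr, hr]
      have hrangeM : LinearMap.range M ≤ Submodule.span F {v} := by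
        rw [hspan_eq]
        exact LinearMap.range_comp_le_range B A
      obtain ⟨g, hg⟩ := LinearMap.exists_leftInverse_of_injective
        (LinearMap.toSpanSingleton F V v) (LinearMap.ker_toSpanSingleton F hu₀)
      have hgv : g v = 1 := by
        have := congrArg (fun f => f 1) (congrArg DFunLike.coe hg)
        simpa [LinearMap.toSpanSingleton_apply] using this
      have hMeq : M = LinearMap.smulRight (g ∘ₗ M) v := by
        refine LinearMap.ext fun x => ?_
        obtain ⟨c, hc⟩ := Submodule.mem_span_singleton.mp (hrangeM ⟨x, rfl⟩)
        rw [LinearMap.smulRight_apply, LinearMap.comp_apply, ← hc, map_smul, hgv]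
        simp
      have hdth : dualTensorHom F V V ((g ∘ₗ M) ⊗ₜ[F] v) = LinearMap.smulRight (g ∘ₗ M) v := by
        refine LinearMap.ext fun x => ?_
        rw [dualTensorHom_apply, LinearMap.smulRight_apply]
      have htr : LinearMap.trace F V M = 1 := by
        rw [hMeq, ← hdth, LinearMap.trace_eq_contract_apply, contractLeft_apply,
          LinearMap.comp_apply, hMv, hgv]
      have htr0 := trace_eq_zero_of_goodAlg hS hMS
      rw [htr0] at htr
      exact zero_ne_one htr
    · obtain ⟨x, hxK, hx0⟩ := (Submodule.ne_bot_iff K).mp hK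
      exact ⟨x, hx0, (memK x).mp hxK⟩

lemma prod_restrict_coe {V : Type v} [AddCommGroup V] [Module F V]
    (S : Submodule F (Module.End F V)) (U : Submodule F V)
    (hUinv : ∀ s ∈ S, ∀ x ∈ U, s x ∈ U) :
    ∀ (fr : List (Module.End F V)) (hfr : ∀ a ∈ fr, a ∈ S) (u : ↥U),
      ((List.pmap (fun a (ha : a ∈ S) => restrictL S U hUinv ⟨a, ha⟩) fr hfr).prod u : V)
        = fr.prod (u : V) := by
  intro fr
  induction fr with
  | nil => intro _ u; simp
  | cons a t iht =>
    intro hfr u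
    simp only [List.pmap, List.prod_cons, Module.End.mul_apply]
    rw [restrictL_coe_apply, iht (fun b hb => hfr b (List.mem_cons_of_mem a hb))]

lemma prod_eq_zero_aux (N : ℕ) :
    ∀ (V : Type v) [AddCommGroup V] [Module F V] [FiniteDimensional F V]
      (S : Submodule F (Module.End F V)), GoodAlg S → Module.finrank F V ≤ N →
      ∀ (l : List (Module.End F V)), (∀ x ∈ l, x ∈ S) →
        Module.finrank F V ≤ l.length → l.prod = 0 := by
  induction N with
  | zero =>
    intro V _ _ _ S _ hle l _ _
    have h0 : Module.finrank F V = 0 := by omega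
    have : Subsingleton V := Module.finrank_zero_iff.mp h0
    exact Subsingleton.elim _ _
  | succ N ih =>
    intro V _ _ _ S hS hle l hl hlen
    classical
    by_cases h0 : Module.finrank F V = 0
    · have : Subsingleton V := Module.finrank_zero_iff.mp h0
      exact Subsingleton.elim _ _
    · have hpos : 0 < Module.finrank F V := Nat.pos_of_ne_zero h0
      set Sd := Submodule.map (Module.Dual.transpose (R := F) (M := V) (M' := V)) S with hSd
      have hposd : 0 < Module.finrank F (Module.Dual F V) := by
        rwa [Subspace.dual_finrank_eq]
      obtain ⟨φ, hφ0, hφ⟩ := exists_common_kernel (Module.finrank F (Module.Dual F V))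
        (Module.Dual F V) Sd (goodAlg_dual hS) le_rfl hposd
      set U := LinearMap.ker φ with hUdef
      have hrange : ∀ s ∈ S, ∀ x : V, s x ∈ U := by
        intro s hs x
        have h1 := hφ (Module.Dual.transpose (R := F) s) ⟨s, hs, rfl⟩
        have h2 : φ (s x) = 0 := by
          have h3 := congrArg (fun ψ : Module.Dual F V => ψ x) h1
          simpa [Module.Dual.transpose_apply] using h3
        exact LinearMap.mem_ker.mpr h2
      have hUne : U ≠ ⊤ := fun h => hφ0 (LinearMap.ker_eq_top.mp h)
      have hUlt : Module.finrank F ↥U < Module.finrank F V :=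
        Submodule.finrank_lt hUne
      have hlne : l.reverse ≠ [] := by
        rw [ne_eq, List.reverse_eq_nil_iff]
        intro h
        rw [h] at hlen
        simp at hlen
        omega
      obtain ⟨a, t, hrev⟩ := List.exists_cons_of_ne_nil hlne
      have hl2 : l = t.reverse ++ [a] := by
        have h4 := congrArg List.reverse hrev
        rwa [List.reverse_reverse, List.reverse_cons] at h4
      have hzS : a ∈ S := hl a (by rw [hl2]; simp)
      have hfrS : ∀ b ∈ t.reverse, b ∈ S := fun b hb =>
        hl b (by rw [hl2]; exact List.mem_append_left _ hb)
      have hlenf : Module.finrank F ↥U ≤ t.reverse.length := by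
        have h5 : l.length = t.reverse.length + 1 := by rw [hl2]; simp
        omega
      have hUinv : ∀ s ∈ S, ∀ x ∈ U, s x ∈ U := fun s hs x _ => hrange s hs x
      set lf := List.pmap (fun b (hb : b ∈ S) => restrictL S U hUinv ⟨b, hb⟩)
        t.reverse hfrS with hlf
      have hlf0 : lf.prod = 0 := by
        refine ih ↥U (LinearMap.range (restrictL S U hUinv)) (goodAlg_restrict hS hUinv)
          (by omega) lf ?_ ?_
        · intro x hx
          obtain ⟨b, hb, rfl⟩ := List.mem_pmap.mp hx
          exact ⟨_, rfl⟩
        · rw [hlf, List.length_pmap]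
          exact hlenf
      refine LinearMap.ext fun x => ?_
      rw [hl2, List.prod_append, List.prod_cons, List.prod_nil, mul_one,
        Module.End.mul_apply, LinearMap.zero_apply]
      have hax : a x ∈ U := hrange a hzS x
      have h6 := prod_restrict_coe S U hUinv t.reverse hfrS ⟨a x, hax⟩
      rw [← h6, hlf0]
      simp

/-- a subalgebra of `M_n(F)` spanned by its nilpotent elements,
all of whose elements have characteristic polynomial splitting over `F`,
satisfies `𝒜^n = 0`; in particular every element is nilpotent. -/
theorem stmt15 {F : Type*} [Field F] {n : ℕ} (hn : 1 ≤ n)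
    (𝒜 : NonUnitalSubalgebra F (Matrix (Fin n) (Fin n) F))
    (hspan : ∀ A ∈ 𝒜,
      A ∈ Submodule.span F {B : Matrix (Fin n) (Fin n) F | B ∈ 𝒜 ∧ IsNilpotent B})
    (hsplit : ∀ A ∈ 𝒜, (Matrix.charpoly A).Splits) :
    (∀ f : Fin n → Matrix (Fin n) (Fin n) F, (∀ i, f i ∈ 𝒜) →
      (List.ofFn f).prod = 0) ∧
    ∀ A ∈ 𝒜, IsNilpotent A := by
  classical
  set e : Matrix (Fin n) (Fin n) F ≃ₐ[F] Module.End F (Fin n → F) :=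
    Matrix.toLinAlgEquiv' with he
  set S : Submodule F (Module.End F (Fin n → F)) :=
    Submodule.map e.toLinearMap 𝒜.toSubmodule with hSdef
  have memS : ∀ x, x ∈ S ↔ ∃ A ∈ 𝒜, e A = x := by
    intro x
    simp only [hSdef, Submodule.mem_map, NonUnitalSubalgebra.mem_toSubmodule]
    exact ⟨fun ⟨A, h1, h2⟩ => ⟨A, h1, h2⟩, fun ⟨A, h1, h2⟩ => ⟨A, h1, h2⟩⟩
  have hGood : GoodAlg S := by
    refine ⟨?_, ?_, ?_⟩
    · intro s hs t ht
      obtain ⟨A, hA, rfl⟩ := (memS s).mp hs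
      obtain ⟨B, hB, rfl⟩ := (memS t).mp ht
      exact (memS _).mpr ⟨A * B, mul_mem hA hB, map_mul e A B⟩
    · intro s hs
      obtain ⟨A, hA, rfl⟩ := (memS s).mp hs
      have h1 : e A ∈ Submodule.map e.toLinearMap
          (Submodule.span F {B : Matrix (Fin n) (Fin n) F | B ∈ 𝒜 ∧ IsNilpotent B}) :=
        ⟨A, hspan A hA, rfl⟩
      rw [Submodule.map_span] at h1
      refine Submodule.span_le.mpr ?_ h1
      rintro _ ⟨B, ⟨hB, hBN⟩, rfl⟩
      refine Submodule.subset_span ⟨(memS _).mpr ⟨B, hB, rfl⟩, ?_⟩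
      exact hBN.map e
    · intro s hs
      obtain ⟨A, hA, rfl⟩ := (memS s).mp hs
      rw [minpoly.algEquiv_eq e A]
      refine Polynomial.Splits.of_dvd (hsplit A hA) (Matrix.charpoly_monic A).ne_zero
        ?_
      exact minpoly.dvd F A (Matrix.aeval_self_charpoly A)
  have hfin : Module.finrank F (Fin n → F) = n := Module.finrank_fin_fun F
  have part1 : ∀ f : Fin n → Matrix (Fin n) (Fin n) F, (∀ i, f i ∈ 𝒜) →
      (List.ofFn f).prod = 0 := by
    intro f hf
    have hmap : ((List.ofFn f).map e).prod = 0 := by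
      refine prod_eq_zero_aux n (Fin n → F) S hGood (le_of_eq hfin) _ ?_ ?_
      · intro x hx
        obtain ⟨B, hB, rfl⟩ := List.mem_map.mp hx
        obtain ⟨i, rfl⟩ := Set.mem_range.mp ((List.mem_ofFn' f B).mp hB)
        exact (memS _).mpr ⟨f i, hf i, rfl⟩
      · simp [hfin]
    have h2 : e ((List.ofFn f).prod) = 0 := by
      rw [map_list_prod e, hmap]
    have := e.injective (h2.trans (map_zero e).symm)
    exact this
  refine ⟨part1, fun A hA => ⟨n, ?_⟩⟩
  have := part1 (fun _ => A) (fun _ => hA)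
  rwa [List.ofFn_const, List.prod_replicate] at this
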